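/- For a strong tournament T on n vertices with scores s_v, the number of minimal feedback vertex sets satisfies f(T) ≤ Σ_{v∈V} M(s_v), where M(k) is the maximum number of minimal FVSs over all k-vertex tournaments; moreover each s_v ≤ n-2. -/

import Mathlib

/-- A set `W` of vertices is acyclic if the digraph `r` restricted to `W`
has no directed cycle (the transitive closure restricted to `W` is irreflexive). -/
def AcyclicOn {V : Type*} (r : V → V → Prop) (W : Set V) : Prop :=
  ∀ v : V, ¬ Relation.TransGen (fun a b => a ∈ W ∧ b ∈ W ∧ r a b) v v

/-- A tournament: an irreflexive relation with exactly one arc between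
every pair of distinct vertices. -/
def IsTournament {V : Type*} (r : V → V → Prop) : Prop :=
  (∀ v : V, ¬ r v v) ∧ ∀ u v : V, u ≠ v → (r u v ↔ ¬ r v u)

/-- A feedback vertex set: its deletion leaves an acyclic digraph. -/
def IsFVS {V : Type*} (r : V → V → Prop) (F : Set V) : Prop :=
  AcyclicOn r Fᶜ

/-- A minimal feedback vertex set. -/
def IsMinimalFVS {V : Type*} (r : V → V → Prop) (F : Set V) : Prop :=
  IsFVS r F ∧ ∀ F' : Set V, F' ⊆ F → IsFVS r F' → F' = F

/-- A feedback vertex set of the subtournament induced on `S`. -/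
def IsFVSOn {V : Type*} (r : V → V → Prop) (S F : Set V) : Prop :=
  F ⊆ S ∧ AcyclicOn r (S \ F)

/-- A minimal feedback vertex set of the subtournament induced on `S`. -/
def IsMinimalFVSOn {V : Type*} (r : V → V → Prop) (S F : Set V) : Prop :=
  IsFVSOn r S F ∧ ∀ F' : Set V, F' ⊆ F → IsFVSOn r S F' → F' = F

/-- Strong (strongly connected): a directed path between any ordered pair. -/
def IsStrong {V : Type*} (r : V → V → Prop) : Prop :=
  ∀ u v : V, Relation.ReflTransGen r u v

/-- The subtournament induced on `S` is strong. -/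
def IsStrongOn {V : Type*} (r : V → V → Prop) (S : Set V) : Prop :=
  ∀ u ∈ S, ∀ v ∈ S, Relation.ReflTransGen (fun a b => a ∈ S ∧ b ∈ S ∧ r a b) u v

/-- The score (out-degree) of a vertex. -/
noncomputable def outScore {V : Type*} (r : V → V → Prop) (v : V) : ℕ :=
  {u : V | r v u}.ncard

/-- The number of minimal feedback vertex sets of a tournament. -/
noncomputable def fvsCount (V : Type*) (r : V → V → Prop) : ℕ :=
  {F : Set V | IsMinimalFVS r F}.ncard

/-- `maxMinFVS n` = maximum number of minimal FVSs over all `n`-vertex tournaments. -/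
noncomputable def maxMinFVS (n : ℕ) : ℕ :=
  sSup {k : ℕ | ∃ r : Fin n → Fin n → Prop, IsTournament r ∧ fvsCount (Fin n) r = k}

/-! ### Auxiliary lemmas -/

theorem aux_acyclicOn_mono {V : Type*} {r : V → V → Prop} {A B : Set V}
    (hAB : A ⊆ B) (hB : AcyclicOn r B) : AcyclicOn r A := by
  intro v hv
  exact hB v (hv.lift (f := id) (fun a b ⟨ha, hb, hr⟩ => ⟨hAB ha, hAB hb, hr⟩))

theorem aux_transGen_ne_of_no_in {V : Type*} {r' : V → V → Prop} {t : V}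
    (ht : ∀ a, ¬ r' a t) {a b : V} (h : Relation.TransGen r' a b) : b ≠ t := by
  rintro rfl
  cases h with
  | single h => exact ht _ h
  | tail _ h => exact ht _ h

theorem aux_acyclicOn_insert_source {V : Type*} {r : V → V → Prop} {t : V} {X : Set V}
    (hT : IsTournament r) (hX : AcyclicOn r X) (htX : ∀ x ∈ X, r t x) (htt : t ∉ X) :
    AcyclicOn r ({t} ∪ X) := by
  set r₁ := fun a b => a ∈ ({t} ∪ X : Set V) ∧ b ∈ ({t} ∪ X : Set V) ∧ r a b with hr₁
  have hnoin : ∀ a, ¬ r₁ a t := by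
    rintro a ⟨ha, -, hr⟩
    rcases ha with ha | ha
    · exact hT.1 t (by rwa [Set.mem_singleton_iff.mp ha] at hr)
    · exact ((hT.2 t a (fun h => htt (h ▸ ha))).mp (htX a ha)) hr
  have memX : ∀ {a : V}, a ∈ ({t} ∪ X : Set V) → a ≠ t → a ∈ X := fun h hne =>
    ((Set.mem_union _ _ _).1 h).resolve_left (fun hm => hne (Set.mem_singleton_iff.1 hm))
  intro v hv
  have hvt : v ≠ t := aux_transGen_ne_of_no_in hnoin hv
  have key : ∀ a : V, Relation.TransGen r₁ a v → a ≠ t →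
      Relation.TransGen (fun a b => a ∈ X ∧ b ∈ X ∧ r a b) a v := by
    intro a h
    induction h using Relation.TransGen.head_induction_on with
    | single h =>
      intro hat
      rcases h with ⟨ha, hb, hr⟩
      exact Relation.TransGen.single ⟨memX ha hat, memX hb hvt, hr⟩
    | head h' hcb ih =>
      intro hat
      rename_i a c
      have hct : c ≠ t := fun hc => hnoin a (hc ▸ h')
      rcases h' with ⟨ha, hc, hr⟩
      exact Relation.TransGen.head ⟨memX ha hat, memX hc hct, hr⟩ (ih hct)
  exact hX v (key v hv hvt)

theorem aux_exists_source {V : Type*} [Finite V] {r : V → V → Prop} {W : Set V}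
    (hT : IsTournament r) (hW : AcyclicOn r W) (hne : W.Nonempty) :
    ∃ t ∈ W, ∀ w ∈ W, w ≠ t → r t w := by
  set r' := fun a b => a ∈ W ∧ b ∈ W ∧ r a b with hr'
  haveI : IsTrans V (Relation.TransGen r') := ⟨fun _ _ _ => Relation.TransGen.trans⟩
  haveI : IsIrrefl V (Relation.TransGen r') := ⟨fun v => hW v⟩
  have hwf : WellFounded (Relation.TransGen r') :=
    Finite.wellFounded_of_trans_of_irrefl _
  have hwf' : WellFounded r' := Subrelation.wf (fun h => Relation.TransGen.single h) hwf
  obtain ⟨t, htW, hmin⟩ := hwf'.has_min W hne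
  refine ⟨t, htW, fun w hw hwt => ?_⟩
  have : ¬ r w t := fun h => hmin w hw ⟨hw, htW, h⟩
  exact (hT.2 t w (Ne.symm hwt)).mpr this

theorem aux_acyclicOn_transfer {V : Type*} {r : V → V → Prop} {S : Set V} {m : ℕ}
    (e : ↥S ≃ Fin m) {A : Set V} (hA : A ⊆ S) :
    AcyclicOn r A ↔ AcyclicOn (fun i j => r (e.symm i : V) (e.symm j : V))
      {i : Fin m | (e.symm i : V) ∈ A} := by
  set r' := fun i j : Fin m => r (e.symm i : V) (e.symm j : V) with hr'
  set φA := {i : Fin m | (e.symm i : V) ∈ A} with hφA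
  constructor
  · intro h i hi
    apply h (e.symm i : V)
    exact hi.lift (f := fun j => ((e.symm j : V) : V)) (fun a b ⟨ha, hb, hr⟩ => ⟨ha, hb, hr⟩)
  · intro h v hv
    classical
    have hvA : v ∈ A := by
      cases hv with
      | single h => exact h.1
      | tail _ h => exact h.2.1
    have hvS : v ∈ S := hA hvA
    set f : V → Fin m := fun u => if h : u ∈ S then e ⟨u, h⟩ else e ⟨v, hvS⟩ with hf
    apply h (f v)
    refine hv.lift (f := f) ?_
    rintro a b ⟨ha, hb, hr⟩
    have haS : a ∈ S := hA ha
    have hbS : b ∈ S := hA hb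
    have hfa : f a = e ⟨a, haS⟩ := dif_pos haS
    have hfb : f b = e ⟨b, hbS⟩ := dif_pos hbS
    simp only [Function.onFun]
    rw [hfa, hfb]
    refine ⟨?_, ?_, ?_⟩
    · show (e.symm (e ⟨a, haS⟩) : V) ∈ A
      simpa using ha
    · show (e.symm (e ⟨b, hbS⟩) : V) ∈ A
      simpa using hb
    · show r (e.symm (e ⟨a, haS⟩) : V) (e.symm (e ⟨b, hbS⟩) : V)
      simpa using hr

theorem aux_minFVSOn_count_le {V : Type*} [Fintype V] {r : V → V → Prop}
    (hT : IsTournament r) (S : Set V) :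
    {G : Set V | IsMinimalFVSOn r S G}.ncard ≤ maxMinFVS S.ncard := by
  set m := S.ncard with hm
  have hcard : Nat.card ↥S = m := Nat.card_coe_set_eq S
  have e : ↥S ≃ Fin m := (Finite.equivFin ↥S).trans (finCongr hcard)
  set r' := fun i j : Fin m => r (e.symm i : V) (e.symm j : V) with hr'
  have hT' : IsTournament r' := by
    constructor
    · intro i; exact hT.1 _
    · intro i j hij
      refine hT.2 _ _ (fun h => hij ?_)
      have : e.symm i = e.symm j := Subtype.coe_injective h
      exact e.symm.injective this ▸ rfl
  set φ : Set V → Set (Fin m) := fun G => {i : Fin m | (e.symm i : V) ∈ G} with hφ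
  have hcompl : ∀ G : Set V, φ (S \ G) = (φ G)ᶜ := by
    intro G
    ext i
    simp [hφ, Set.mem_diff, (e.symm i).2]
  have hcorr : ∀ G, IsMinimalFVSOn r S G → IsMinimalFVS r' (φ G) := by
    rintro G ⟨⟨hGS, hGac⟩, hGmin⟩
    constructor
    · show AcyclicOn r' (φ G)ᶜ
      rw [← hcompl]
      exact (aux_acyclicOn_transfer e (Set.diff_subset)).1 hGac
    · intro F' hF'sub hF'fvs
      set G' : Set V := {u | ∃ h : u ∈ S, e ⟨u, h⟩ ∈ F'} with hG'
      have hφG' : φ G' = F' := by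
        ext i
        simp only [hφ, hG', Set.mem_setOf_eq]
        constructor
        · rintro ⟨h, hi⟩
          have : (⟨(e.symm i : V), h⟩ : ↥S) = e.symm i := Subtype.ext rfl
          rwa [this, e.apply_symm_apply] at hi
        · intro hi
          refine ⟨(e.symm i).2, ?_⟩
          have : (⟨(e.symm i : V), (e.symm i).2⟩ : ↥S) = e.symm i := Subtype.ext rfl
          rwa [this, e.apply_symm_apply]
      have hG'S : G' ⊆ S := fun u ⟨h, _⟩ => h
      have hG'G : G' ⊆ G := by
        rintro u ⟨h, hu⟩
        have := hF'sub hu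
        simpa [hφ] using this
      have hG'fvs : IsFVSOn r S G' := by
        refine ⟨hG'S, ?_⟩
        rw [aux_acyclicOn_transfer e (Set.diff_subset)]
        show AcyclicOn r' (φ (S \ G'))
        rw [hcompl, hφG']
        exact hF'fvs
      rw [← hφG', hGmin G' hG'G hG'fvs]
  have hinj : Set.InjOn φ {G : Set V | IsMinimalFVSOn r S G} := by
    intro G₁ h₁ G₂ h₂ heq
    have hG₁S : G₁ ⊆ S := h₁.1.1
    have hG₂S : G₂ ⊆ S := h₂.1.1
    ext u
    constructor
    · intro hu
      have huS := hG₁S hu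
      have : e ⟨u, huS⟩ ∈ φ G₁ := by simp [hφ, hu]
      rw [heq] at this
      simpa [hφ] using this
    · intro hu
      have huS := hG₂S hu
      have : e ⟨u, huS⟩ ∈ φ G₂ := by simp [hφ, hu]
      rw [← heq] at this
      simpa [hφ] using this
  calc {G : Set V | IsMinimalFVSOn r S G}.ncard
      ≤ {F : Set (Fin m) | IsMinimalFVS r' F}.ncard :=
        Set.ncard_le_ncard_of_injOn φ (fun G hG => hcorr G hG) hinj (Set.toFinite _)
    _ ≤ maxMinFVS m := by
        apply le_csSup
        · refine ⟨(Set.univ : Set (Set (Fin m))).ncard, ?_⟩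
          rintro k ⟨r'', _, rfl⟩
          exact Set.ncard_le_ncard (Set.subset_univ _) (Set.toFinite _)
        · exact ⟨r', hT', rfl⟩

theorem aux_ncard_biUnion_le {α ι : Type*} [Fintype α] (s : Finset ι) (A : ι → Set α) :
    (⋃ i ∈ s, A i).ncard ≤ ∑ i ∈ s, (A i).ncard := by
  classical
  induction s using Finset.induction with
  | empty => simp
  | insert a s' h ih =>
    rw [Finset.set_biUnion_insert, Finset.sum_insert h]
    exact le_trans (Set.ncard_union_le _ _)
      (Nat.add_le_add_left ih _)

/-- The injection step: minimal FVSs with complement-source `t` inject into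
minimal FVSs of the subtournament on the out-neighborhood of `t`. -/
theorem aux_At_le {V : Type*} [Fintype V] {r : V → V → Prop} (hT : IsTournament r) (t : V) :
    {F : Set V | IsMinimalFVS r F ∧ t ∉ F ∧ ∀ w, w ∉ F → w ≠ t → r t w}.ncard ≤
      {G : Set V | IsMinimalFVSOn r {u : V | r t u} G}.ncard := by
  set St : Set V := {u : V | r t u} with hSt
  have htSt : t ∉ St := hT.1 t
  -- key identity for F in the set
  have hid : ∀ F : Set V, t ∉ F → (∀ w, w ∉ F → w ≠ t → r t w) →
      St \ (F ∩ St) = Fᶜ \ {t} := by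
    intro F htF hsrc
    ext u
    constructor
    · rintro ⟨huSt, hu⟩
      have hut : u ≠ t := fun h => htSt (h ▸ huSt)
      have huF : u ∉ F := fun h => hu ⟨h, huSt⟩
      exact ⟨huF, hut⟩
    · rintro ⟨huF, hut⟩
      have huSt : u ∈ St := hsrc u huF (by simpa using hut)
      exact ⟨huSt, fun h => huF h.1⟩
  have hWeq : ∀ F : Set V, t ∉ F → ({t} ∪ (Fᶜ \ {t}) : Set V) = Fᶜ := by
    intro F htF
    rw [Set.singleton_union, Set.insert_diff_singleton, Set.insert_eq_self.2 (Set.mem_compl htF)]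
  apply Set.ncard_le_ncard_of_injOn (fun F => F ∩ St)
  · rintro F ⟨⟨hFac, hFmin⟩, htF, hsrc⟩
    constructor
    · refine ⟨Set.inter_subset_right, ?_⟩
      rw [hid F htF hsrc]
      exact aux_acyclicOn_mono Set.diff_subset hFac
    · intro G' hG'sub hG'fvs
      set X : Set V := St \ G' with hX
      have hXac : AcyclicOn r X := hG'fvs.2
      have htX : t ∉ X := fun h => htSt h.1
      have hW'ac : AcyclicOn r ({t} ∪ X) :=
        aux_acyclicOn_insert_source hT hXac (fun x hx => hx.1) htX
      have hsub : ({t} ∪ X : Set V)ᶜ ⊆ F := by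
        rw [← Set.compl_subset_compl, compl_compl]
        intro u hu
        rcases eq_or_ne u t with rfl | hut
        · exact Or.inl rfl
        · refine Or.inr ?_
          have : u ∈ St \ (F ∩ St) := by rw [hid F htF hsrc]; exact ⟨hu, hut⟩
          exact Set.diff_subset_diff_right hG'sub this
      have hfvs : IsFVS r ({t} ∪ X : Set V)ᶜ := by
        show AcyclicOn r ({t} ∪ X : Set V)ᶜᶜ
        rw [compl_compl]
        exact hW'ac
      have heq : ({t} ∪ X : Set V)ᶜ = F := hFmin _ hsub hfvs
      have hW'F : ({t} ∪ X : Set V) = Fᶜ := by rw [← heq, compl_compl]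
      have hXeq : X = Fᶜ \ {t} := by
        rw [← hW'F, Set.union_diff_left]
        exact (Set.diff_singleton_eq_self htX).symm
      have : St \ G' = St \ (F ∩ St) := by
        rw [hid F htF hsrc, ← hXeq]
      calc G' = St \ (St \ G') := (Set.diff_diff_cancel_left hG'fvs.1).symm
        _ = St \ (St \ (F ∩ St)) := by rw [this]
        _ = F ∩ St := Set.diff_diff_cancel_left Set.inter_subset_right
  · rintro F₁ ⟨⟨h₁ac, h₁min⟩, h₁t, h₁src⟩ F₂ ⟨⟨h₂ac, h₂min⟩, h₂t, h₂src⟩ heq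
    have e₁ : F₁ᶜ = {t} ∪ (St \ (F₁ ∩ St)) := by
      rw [hid F₁ h₁t h₁src, hWeq F₁ h₁t]
    have e₂ : F₂ᶜ = {t} ∪ (St \ (F₂ ∩ St)) := by
      rw [hid F₂ h₂t h₂src, hWeq F₂ h₂t]
    have heq' : F₁ ∩ St = F₂ ∩ St := heq
    have hcc : F₁ᶜ = F₂ᶜ := by
      rw [e₁, e₂, heq']
    exact compl_injective hcc

/-! ### Main theorem -/

/-- For a strong tournament on `n` vertices, `f(T) ≤ Σ_v M(s_v)`, and moreover every
score satisfies `s_v ≤ n - 2`. -/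
theorem stmt15 {V : Type*} [Fintype V] [Nonempty V] (n : ℕ)
    (hcard : Fintype.card V = n)
    (r : V → V → Prop) (hT : IsTournament r) (hS : IsStrong r) :
    {F : Set V | IsMinimalFVS r F}.ncard ≤ ∑ v : V, maxMinFVS (outScore r v) ∧
    ∀ v : V, outScore r v ≤ n - 2 := by
  obtain ⟨v₀⟩ := ‹Nonempty V›
  constructor
  · -- the counting bound
    set A : V → Set (Set V) :=
      fun t => {F : Set V | IsMinimalFVS r F ∧ t ∉ F ∧ ∀ w, w ∉ F → w ≠ t → r t w} with hA
    have hcover : {F : Set V | IsMinimalFVS r F} ⊆ ⋃ t, A t := by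
      intro F hF
      have hFne : (Fᶜ : Set V).Nonempty := by
        rw [Set.nonempty_iff_ne_empty]
        intro hempty
        have hFuniv : F = Set.univ := by
          rw [← compl_compl F, hempty, Set.compl_empty]
        have hfvs' : IsFVS r ({v₀}ᶜ : Set V) := by
          show AcyclicOn r ({v₀}ᶜ : Set V)ᶜ
          rw [compl_compl]
          have hstep : ∀ {a b : V},
              (a ∈ ({v₀} : Set V) ∧ b ∈ ({v₀} : Set V) ∧ r a b) → False := by
            rintro a b ⟨rfl, hb, hr⟩
            rw [Set.eq_of_mem_singleton hb] at hr
            exact hT.1 _ hr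
          intro w hw
          cases hw with
          | single h => exact hstep h
          | tail _ h => exact hstep h
        have := hF.2 ({v₀}ᶜ : Set V) (hFuniv ▸ Set.subset_univ _) hfvs'
        have : v₀ ∈ ({v₀}ᶜ : Set V) := this ▸ hFuniv ▸ Set.mem_univ v₀
        exact this rfl
      obtain ⟨t, htW, hsrc⟩ := aux_exists_source hT hF.1 hFne
      refine Set.mem_iUnion.2 ⟨t, hF, htW, fun w hw hwt => hsrc w hw hwt⟩
    calc {F : Set V | IsMinimalFVS r F}.ncard
        ≤ (⋃ t, A t).ncard := Set.ncard_le_ncard hcover (Set.toFinite _)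
      _ = (⋃ t ∈ (Finset.univ : Finset V), A t).ncard := by simp
      _ ≤ ∑ t : V, (A t).ncard := aux_ncard_biUnion_le _ _
      _ ≤ ∑ t : V, maxMinFVS (outScore r t) := by
          apply Finset.sum_le_sum
          intro t _
          calc (A t).ncard ≤ {G : Set V | IsMinimalFVSOn r {u : V | r t u} G}.ncard :=
                aux_At_le hT t
            _ ≤ maxMinFVS ({u : V | r t u}.ncard) := aux_minFVSOn_count_le hT _
            _ = maxMinFVS (outScore r t) := rfl
  · -- the score bound
    intro v
    by_cases hex : ∃ u : V, u ≠ v ∧ ¬ r v u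
    · obtain ⟨u₀, hu₀v, hu₀⟩ := hex
      have hdisj : Disjoint {u : V | r v u} ({v, u₀} : Set V) := by
        rw [Set.disjoint_iff]
        rintro w ⟨hw, hw'⟩
        rcases hw' with rfl | rfl
        · exact hT.1 _ hw
        · exact hu₀ hw
      have hunion : ({u : V | r v u} ∪ {v, u₀}).ncard
          = {u : V | r v u}.ncard + 2 := by
        rw [Set.ncard_union_eq hdisj (Set.toFinite _) (Set.toFinite _),
          Set.ncard_pair (Ne.symm hu₀v)]
      have hle : ({u : V | r v u} ∪ {v, u₀}).ncard ≤ n := by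
        calc ({u : V | r v u} ∪ {v, u₀}).ncard ≤ (Set.univ : Set V).ncard :=
              Set.ncard_le_ncard (Set.subset_univ _) (Set.toFinite _)
          _ = n := by rw [Set.ncard_univ, Nat.card_eq_fintype_card, hcard]
      have : {u : V | r v u}.ncard + 2 ≤ n := hunion ▸ hle
      exact Nat.le_sub_of_add_le this
    · -- v beats everyone else; strongness forces V ≃ {v}, score 0
      push_neg at hex
      have hall : ∀ u : V, u ≠ v → r v u := hex
      have hnone : ∀ u : V, ¬ r u v := by
        intro u hu
        rcases eq_or_ne u v with rfl | huv
        · exact hT.1 u hu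
        · exact ((hT.2 v u (Ne.symm huv)).mp (hall u huv)) hu
      have hsingle : ∀ u : V, u = v := by
        intro u
        by_contra huv
        have := hS u v
        rcases Relation.ReflTransGen.cases_tail this with h | ⟨c, _, hc⟩
        · exact huv h.symm
        · exact hnone c hc
      have : {u : V | r v u} = ∅ := by
        ext u
        simp only [Set.mem_setOf_eq, Set.mem_empty_iff_false, iff_false]
        rw [hsingle u]
        exact hT.1 v
      rw [outScore, this, Set.ncard_empty]
      exact Nat.zero_le _
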